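/- Let G be a locally finite hypergroupoid with finite left and right multiplicities |g|_l, |g|_r ∈ ℕ₊, and define χ(g) = |g|_l / |g|_r ∈ ℚ₊. Given the identities |a|_l·μ(a;g,g') = |g'|_l·μ(g';g*,a) and |a|_r·μ(a;g,g') = |g|_r·μ(g;a,g'*) together with the dual symmetry μ(a;g,g') = μ(a*;g'*,g*) and |g*|_l = |g|_r, it follows that χ is multiplicative: for arrows a, g, g' with a ∈ g∘g' and μ(a;g,g') > 0, χ(a) = χ(g)·χ(g'). -/
import Mathlib


/-- For a locally finite hypergroupoid with finite positive left and right multiplicities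
`l`, `r`, involution `star`, and coefficients `μ` satisfying the combinatorial identities
(1) `l a · μ(a;g,g') = l g' · μ(g';g*,a)`, (2) `r a · μ(a;g,g') = r g · μ(g;a,g'*)`,
(3) `μ(a;g,g') = μ(a*;g'*,g*)`, together with `l(g*) = r g`, the function
`χ(g) = l g / r g` is multiplicative: `μ(a;g,g') > 0` implies `χ(a) = χ(g)·χ(g')`. -/
theorem stmt16 {G : Type*} (star : G → G) (l r : G → ℕ)
    (hl : ∀ g, 0 < l g) (hr : ∀ g, 0 < r g)
    (hss : ∀ g, star (star g) = g)
    (hstar : ∀ g, l (star g) = r g)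
    (μ : G → G → G → ℕ)
    (h1 : ∀ a g g', l a * μ a g g' = l g' * μ g' (star g) a)
    (h2 : ∀ a g g', r a * μ a g g' = r g * μ g a (star g'))
    (h3 : ∀ a g g', μ a g g' = μ (star a) (star g') (star g))
    (χ : G → ℚ) (hχ : ∀ g, χ g = (l g : ℚ) / (r g : ℚ)) :
    ∀ a g g', 0 < μ a g g' → χ a = χ g * χ g' := by
  intro a g g' hm
  have hA := h1 a g g'
  have hB := h2 a g g'
  -- r g' * ν1 = r (star g) * μ (star g) g' (star a)
  have hC := h2 g' (star g) a
  have hrs : r (star g) = l g := by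
    rw [← hstar (star g), hss]
  have hD : μ (star g) g' (star a) = μ g a (star g') := by
    rw [h3 (star g) g' (star a), hss, hss]
  rw [hrs, hD] at hC
  -- now hC : r g' * μ g' (star g) a = l g * μ g a (star g')
  set m := μ a g g' with hmdef
  set ν1 := μ g' (star g) a with hν1
  set ν2 := μ g a (star g') with hν2
  have hm0 : (m : ℚ) ≠ 0 := by positivity
  have qA : (l a : ℚ) * m = l g' * ν1 := by exact_mod_cast congrArg Nat.cast hA
  have qB : (r a : ℚ) * m = r g * ν2 := by exact_mod_cast congrArg Nat.cast hB
  have qC : (r g' : ℚ) * ν1 = l g * ν2 := by exact_mod_cast congrArg Nat.cast hC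
  have key : (l a : ℚ) * (r g * r g') * m = r a * (l g * l g') * m := by
    linear_combination (r g : ℚ) * r g' * qA - (l g : ℚ) * l g' * qB + (l g' : ℚ) * r g * qC
  have key2 : (l a : ℚ) * (r g * r g') = r a * (l g * l g') :=
    mul_right_cancel₀ hm0 key
  rw [hχ, hχ, hχ]
  have hra : (r a : ℚ) ≠ 0 := by have := hr a; positivity
  have hrg : (r g : ℚ) ≠ 0 := by have := hr g; positivity
  have hrg' : (r g' : ℚ) ≠ 0 := by have := hr g'; positivity
  field_simp
  linear_combination key2
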